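/- Let 0 ≤ α < 1. For integers i ≥ j ≥ 1 define s_α(i,j) := (i!/j!) · Σ_{i_1,…,i_j ≥ 1, i_1+⋯+i_j = i} Π_{l=1}^{j} Γ(i_l − α) / i_l!; set s_α(0,0) := 1 and s_α(i,j) := 0 if j > i or (j = 0 and i ≥ 1). Then for all integers i ≥ 0 and j ≥ 1 the recursion s_α(i+1,j) = Γ(1−α)·s_α(i,j−1) + (i − αj)·s_α(i,j) holds. Equivalently, s_α(i,j)/(Γ(1−α))^j equals the generalized Stirling number S(i,j;−1,−α,0). -/

import Mathlib

/-- the generalized Stirling numbers `S(i,j; a,b,r)` of Hsu and Shiue, defined by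
`S(0,0) = 1`, `S(i,j) = 0` for `j > i` (automatic below), and the recursion
`S(i+1,j) = S(i,j-1) + (jb - ia + r) S(i,j)` (with `S(i,-1) := 0`). -/
noncomputable def gstir (a b r : ℝ) : ℕ → ℕ → ℝ
  | 0, 0 => 1
  | 0, _ + 1 => 0
  | i + 1, 0 => (r - i * a) * gstir a b r i 0
  | i + 1, j + 1 => gstir a b r i j + (((j : ℝ) + 1) * b - i * a + r) * gstir a b r i (j + 1)

/-- `s_α(i,j) := (i!/j!) ∑_{i_1+⋯+i_j = i, i_l ≥ 1} ∏_l Γ(i_l - α)/i_l!`, the sum running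
over compositions of `i` into `j` positive parts.  This single formula also realizes the
boundary values `s_α(0,0) = 1` and `s_α(i,j) = 0` if `j > i` or (`j = 0` and `i ≥ 1`). -/
noncomputable def sAlphaComb (α : ℝ) (i j : ℕ) : ℝ :=
  (Nat.factorial i : ℝ) / (Nat.factorial j) *
    ∑ c ∈ (Finset.Nat.antidiagonalTuple j i).filter fun c => ∀ l, 1 ≤ c l,
      ∏ l, Real.Gamma ((c l : ℝ) - α) / (Nat.factorial (c l))

/-- abbreviation for the summand `Γ(n-α)/n!`. -/
noncomputable def gamTerm (α : ℝ) (n : ℕ) : ℝ := Real.Gamma ((n : ℝ) - α) / (Nat.factorial n)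

/-- the set of compositions of `i` into `j` positive parts. -/
def comps (j i : ℕ) : Finset (Fin j → ℕ) :=
  (Finset.Nat.antidiagonalTuple j i).filter fun c => ∀ l, 1 ≤ c l

lemma mem_comps {j i : ℕ} {c : Fin j → ℕ} :
    c ∈ comps j i ↔ (∑ l, c l = i) ∧ ∀ l, 1 ≤ c l := by
  simp [comps, Finset.Nat.mem_antidiagonalTuple]

/-- the inner sum of `sAlphaComb`. -/
noncomputable def Tcomb (α : ℝ) (j i : ℕ) : ℝ := ∑ c ∈ comps j i, ∏ l, gamTerm α (c l)

lemma sAlphaComb_eq (α : ℝ) (i j : ℕ) :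
    sAlphaComb α i j = (Nat.factorial i : ℝ) / (Nat.factorial j) * Tcomb α j i := rfl

lemma gamTerm_one (α : ℝ) : gamTerm α 1 = Real.Gamma (1 - α) := by simp [gamTerm]

lemma gamTerm_step (α : ℝ) (h1 : α < 1) (n : ℕ) (hn : 1 ≤ n) :
    ((n : ℝ) + 1) * gamTerm α (n + 1) = ((n : ℝ) - α) * gamTerm α n := by
  have hn' : (1 : ℝ) ≤ (n : ℝ) := by exact_mod_cast hn
  have hne : (n : ℝ) - α ≠ 0 := by nlinarith
  have hg : Real.Gamma (((n : ℝ) + 1) - α) = ((n : ℝ) - α) * Real.Gamma ((n : ℝ) - α) := by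
    rw [show ((n : ℝ) + 1) - α = ((n : ℝ) - α) + 1 by ring, Real.Gamma_add_one hne]
  have hfac : (Nat.factorial n : ℝ) ≠ 0 := by positivity
  simp only [gamTerm, Nat.factorial_succ]
  push_cast
  rw [hg]
  field_simp

lemma key (α : ℝ) (h1 : α < 1) (i j : ℕ) :
    ((i : ℝ) + 1) * Tcomb α (j + 1) (i + 1)
      = ((j : ℝ) + 1) * Real.Gamma (1 - α) * Tcomb α j i
        + ((i : ℝ) - α * ((j : ℝ) + 1)) * Tcomb α (j + 1) i := by
  have step1 : ((i : ℝ) + 1) * Tcomb α (j + 1) (i + 1)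
      = ∑ l : Fin (j + 1), ∑ c ∈ comps (j + 1) (i + 1), (c l : ℝ) * ∏ m, gamTerm α (c m) := by
    rw [Finset.sum_comm, Tcomb, Finset.mul_sum]
    refine Finset.sum_congr rfl fun c hc => ?_
    rw [← Finset.sum_mul]
    congr 1
    have hs := (mem_comps.mp hc).1
    rw [show ((i : ℝ) + 1) = ((i + 1 : ℕ) : ℝ) by push_cast; ring, ← hs, Nat.cast_sum]
  have step2 : ∀ l : Fin (j + 1),
      ∑ c ∈ comps (j + 1) (i + 1), (c l : ℝ) * ∏ m, gamTerm α (c m)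
        = Real.Gamma (1 - α) * Tcomb α j i
          + ∑ d ∈ comps (j + 1) i, ((d l : ℝ) - α) * ∏ m, gamTerm α (d m) := by
    intro l
    rw [← Finset.sum_filter_add_sum_filter_not (comps (j + 1) (i + 1)) (fun c => c l = 1)]
    congr 1
    · -- case `c l = 1` : delete position `l`
      rw [Tcomb, Finset.mul_sum]
      refine Finset.sum_nbij' (fun c => c ∘ l.succAbove)
        (fun d => Fin.insertNth (α := fun _ => ℕ) l 1 d) ?_ ?_ ?_ ?_ ?_
      · intro c hc
        obtain ⟨hc, hcl⟩ := Finset.mem_filter.mp hc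
        obtain ⟨hsum, hpos⟩ := mem_comps.mp hc
        refine mem_comps.mpr ⟨?_, fun m => hpos _⟩
        show ∑ m : Fin j, c (l.succAbove m) = i
        have ha := Fin.sum_univ_succAbove c l
        omega
      · intro d hd
        obtain ⟨hsum, hpos⟩ := mem_comps.mp hd
        refine Finset.mem_filter.mpr ⟨mem_comps.mpr ⟨?_, ?_⟩, ?_⟩
        · show ∑ m : Fin (j + 1), Fin.insertNth (α := fun _ => ℕ) l 1 d m = i + 1
          rw [Fin.sum_univ_succAbove (Fin.insertNth (α := fun _ => ℕ) l 1 d) l,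
            Fin.insertNth_apply_same]
          have hb : ∀ m : Fin j,
              Fin.insertNth (α := fun _ => ℕ) l 1 d (l.succAbove m) = d m := fun m =>
            Fin.insertNth_apply_succAbove (α := fun _ => ℕ) l 1 d m
          rw [Finset.sum_congr rfl fun m _ => hb m, hsum]
          omega
        · intro m
          show 1 ≤ Fin.insertNth (α := fun _ => ℕ) l 1 d m
          rcases eq_or_ne m l with h | hml
          · rw [h, Fin.insertNth_apply_same]
          · obtain ⟨k, rfl⟩ := Fin.exists_succAbove_eq hml
            rw [Fin.insertNth_apply_succAbove]
            exact hpos k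
        · show Fin.insertNth (α := fun _ => ℕ) l 1 d l = 1
          exact Fin.insertNth_apply_same (α := fun _ => ℕ) l 1 d
      · intro c hc
        obtain ⟨_, hcl⟩ := Finset.mem_filter.mp hc
        show Fin.insertNth (α := fun _ => ℕ) l 1 (c ∘ l.succAbove) = c
        have := Fin.insertNth_self_removeNth (α := fun _ => ℕ) l c
        rw [hcl] at this
        exact this
      · intro d hd
        show (Fin.insertNth (α := fun _ => ℕ) l 1 d) ∘ l.succAbove = d
        exact funext fun m => Fin.insertNth_apply_succAbove (α := fun _ => ℕ) l 1 d m
      · intro c hc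
        obtain ⟨_, hcl⟩ := Finset.mem_filter.mp hc
        show (c l : ℝ) * ∏ m, gamTerm α (c m)
            = Real.Gamma (1 - α) * ∏ m : Fin j, gamTerm α ((c ∘ l.succAbove) m)
        rw [Fin.prod_univ_succAbove (fun m => gamTerm α (c m)) l, hcl, gamTerm_one]
        simp [Function.comp]
    · -- case `c l ≠ 1` : decrease position `l` by one
      refine Finset.sum_nbij' (fun c => Function.update c l (c l - 1))
        (fun d => Function.update d l (d l + 1)) ?_ ?_ ?_ ?_ ?_
      · intro c hc
        obtain ⟨hc, hcl⟩ := Finset.mem_filter.mp hc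
        obtain ⟨hsum, hpos⟩ := mem_comps.mp hc
        have h2 : 2 ≤ c l := by have := hpos l; omega
        refine mem_comps.mpr ⟨?_, ?_⟩
        · show ∑ m : Fin (j + 1), Function.update c l (c l - 1) m = i
          have hb := Fin.sum_univ_succAbove (Function.update c l (c l - 1)) l
          rw [Function.update_self] at hb
          have hb2 : ∀ m : Fin j,
              Function.update c l (c l - 1) (l.succAbove m) = c (l.succAbove m) := fun m =>
            Function.update_of_ne (Fin.succAbove_ne l m) _ c
          rw [Finset.sum_congr rfl fun m _ => hb2 m] at hb
          have ha := Fin.sum_univ_succAbove c l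
          omega
        · intro m
          show 1 ≤ Function.update c l (c l - 1) m
          rcases eq_or_ne m l with h | hml
          · rw [h, Function.update_self]
            omega
          · rw [Function.update_of_ne hml]
            exact hpos m
      · intro d hd
        obtain ⟨hsum, hpos⟩ := mem_comps.mp hd
        refine Finset.mem_filter.mpr ⟨mem_comps.mpr ⟨?_, ?_⟩, ?_⟩
        · show ∑ m : Fin (j + 1), Function.update d l (d l + 1) m = i + 1
          have hb := Fin.sum_univ_succAbove (Function.update d l (d l + 1)) l
          rw [Function.update_self] at hb
          have hb2 : ∀ m : Fin j,
              Function.update d l (d l + 1) (l.succAbove m) = d (l.succAbove m) := fun m =>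
            Function.update_of_ne (Fin.succAbove_ne l m) _ d
          rw [Finset.sum_congr rfl fun m _ => hb2 m] at hb
          have ha := Fin.sum_univ_succAbove d l
          omega
        · intro m
          show 1 ≤ Function.update d l (d l + 1) m
          rcases eq_or_ne m l with h | hml
          · rw [h, Function.update_self]
            omega
          · rw [Function.update_of_ne hml]
            exact hpos m
        · show ¬ Function.update d l (d l + 1) l = 1
          rw [Function.update_self]
          have := hpos l
          omega
      · intro c hc
        obtain ⟨hc, hcl⟩ := Finset.mem_filter.mp hc
        obtain ⟨hsum, hpos⟩ := mem_comps.mp hc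
        have h2 : 2 ≤ c l := by have := hpos l; omega
        show Function.update (Function.update c l (c l - 1)) l
            (Function.update c l (c l - 1) l + 1) = c
        funext m
        rcases eq_or_ne m l with h | hml
        · rw [h, Function.update_self, Function.update_self]
          omega
        · rw [Function.update_of_ne hml, Function.update_of_ne hml]
      · intro d hd
        show Function.update (Function.update d l (d l + 1)) l
            (Function.update d l (d l + 1) l - 1) = d
        funext m
        rcases eq_or_ne m l with h | hml
        · rw [h, Function.update_self, Function.update_self]
          omega
        · rw [Function.update_of_ne hml, Function.update_of_ne hml]
      · intro c hc
        obtain ⟨hc, hcl⟩ := Finset.mem_filter.mp hc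
        obtain ⟨hsum, hpos⟩ := mem_comps.mp hc
        have h2 : 2 ≤ c l := by have := hpos l; omega
        show (c l : ℝ) * ∏ m, gamTerm α (c m)
            = ((Function.update c l (c l - 1) l : ℝ) - α)
              * ∏ m, gamTerm α (Function.update c l (c l - 1) m)
        rw [Function.update_self,
          Fin.prod_univ_succAbove (fun m => gamTerm α (c m)) l,
          Fin.prod_univ_succAbove (fun m => gamTerm α (Function.update c l (c l - 1) m)) l,
          Function.update_self]
        have hb2 : ∀ m : Fin j,
            Function.update c l (c l - 1) (l.succAbove m) = c (l.succAbove m) := fun m =>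
          Function.update_of_ne (Fin.succAbove_ne l m) _ c
        rw [Finset.prod_congr rfl fun m _ => congrArg (gamTerm α) (hb2 m)]
        obtain ⟨n, hn⟩ : ∃ n, c l = n + 1 := ⟨c l - 1, by omega⟩
        rw [hn, show n + 1 - 1 = n from rfl]
        have hst := gamTerm_step α h1 n (by omega)
        push_cast
        rw [← mul_assoc, ← mul_assoc, hst]
  calc ((i : ℝ) + 1) * Tcomb α (j + 1) (i + 1)
      = ∑ l : Fin (j + 1), (Real.Gamma (1 - α) * Tcomb α j i
          + ∑ d ∈ comps (j + 1) i, ((d l : ℝ) - α) * ∏ m, gamTerm α (d m)) := by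
        rw [step1]; exact Finset.sum_congr rfl fun l _ => step2 l
    _ = ((j : ℝ) + 1) * Real.Gamma (1 - α) * Tcomb α j i
          + ∑ d ∈ comps (j + 1) i,
              (∑ l : Fin (j + 1), ((d l : ℝ) - α)) * ∏ m, gamTerm α (d m) := by
        rw [Finset.sum_add_distrib, Finset.sum_const, Finset.sum_comm]
        congr 1
        · simp only [Finset.card_univ, Fintype.card_fin, nsmul_eq_mul]
          push_cast; ring
        · exact Finset.sum_congr rfl fun d _ => (Finset.sum_mul _ _ _).symm
    _ = ((j : ℝ) + 1) * Real.Gamma (1 - α) * Tcomb α j i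
          + ((i : ℝ) - α * ((j : ℝ) + 1)) * Tcomb α (j + 1) i := by
        congr 1
        rw [Tcomb, Finset.mul_sum]
        refine Finset.sum_congr rfl fun d hd => ?_
        obtain ⟨hsum, _⟩ := mem_comps.mp hd
        congr 1
        rw [Finset.sum_sub_distrib, ← Nat.cast_sum, hsum, Finset.sum_const,
          Finset.card_univ, Fintype.card_fin, nsmul_eq_mul]
        push_cast; ring

lemma sRec (α : ℝ) (h1 : α < 1) (i j : ℕ) :
    sAlphaComb α (i + 1) (j + 1)
      = Real.Gamma (1 - α) * sAlphaComb α i j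
        + ((i : ℝ) - α * ((j : ℝ) + 1)) * sAlphaComb α i (j + 1) := by
  have hT := key α h1 i j
  have hj : (Nat.factorial j : ℝ) ≠ 0 := by positivity
  rw [sAlphaComb_eq, sAlphaComb_eq, sAlphaComb_eq]
  have h2 : ((Nat.factorial (i + 1) : ℕ) : ℝ) / (Nat.factorial (j + 1))
        * Tcomb α (j + 1) (i + 1)
      = (Nat.factorial i : ℝ) / (Nat.factorial (j + 1))
        * (((i : ℝ) + 1) * Tcomb α (j + 1) (i + 1)) := by
    rw [Nat.factorial_succ]; push_cast; ring
  rw [h2, hT, Nat.factorial_succ]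
  push_cast
  field_simp

lemma s_zero_zero (α : ℝ) : sAlphaComb α 0 0 = 1 := by
  simp [sAlphaComb]

lemma s_succ_zero (α : ℝ) (i : ℕ) : sAlphaComb α (i + 1) 0 = 0 := by
  simp [sAlphaComb]

lemma s_eq_zero_of_lt (α : ℝ) {i j : ℕ} (h : i < j) : sAlphaComb α i j = 0 := by
  rw [sAlphaComb]
  have hemp : ∀ c ∈ Finset.Nat.antidiagonalTuple j i, ¬ (∀ l, 1 ≤ c l) := by
    intro c hc hall
    have hs := Finset.Nat.mem_antidiagonalTuple.mp hc
    have hle : j ≤ i := by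
      calc j = ∑ _l : Fin j, 1 := by simp
        _ ≤ ∑ l, c l := Finset.sum_le_sum fun l _ => hall l
        _ = i := hs
    omega
  rw [Finset.filter_false_of_mem hemp]
  simp

/-- for `0 ≤ α < 1`, the combinatorially defined `s_α` satisfies the
recursion `s_α(i+1,j) = Γ(1-α) s_α(i,j-1) + (i - αj) s_α(i,j)` for `i ≥ 0`, `j ≥ 1`;
equivalently, `s_α(i,j)/Γ(1-α)^j` equals the generalized Stirling number
`S(i,j; -1, -α, 0)` of Hsu and Shiue. -/
theorem statement12 (α : ℝ) (h0 : 0 ≤ α) (h1 : α < 1) :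
    (∀ i j : ℕ, 1 ≤ j →
      sAlphaComb α (i + 1) j =
        Real.Gamma (1 - α) * sAlphaComb α i (j - 1) + ((i : ℝ) - α * j) * sAlphaComb α i j) ∧
    (∀ i j : ℕ, sAlphaComb α i j / (Real.Gamma (1 - α)) ^ j = gstir (-1) (-α) 0 i j) := by
  have hΓ : Real.Gamma (1 - α) ≠ 0 := ne_of_gt (Real.Gamma_pos_of_pos (by linarith))
  constructor
  · intro i j hj
    cases j with
    | zero => omega
    | succ k =>
      rw [show k + 1 - 1 = k from rfl, sRec α h1 i k]
      push_cast
      ring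
  · intro i
    induction i with
    | zero =>
      intro j
      cases j with
      | zero => simp [gstir, s_zero_zero]
      | succ k => simp [gstir, s_eq_zero_of_lt α (Nat.succ_pos k)]
    | succ i ih =>
      intro j
      cases j with
      | zero =>
        show sAlphaComb α (i + 1) 0 / _ = ((0 : ℝ) - i * (-1)) * gstir (-1) (-α) 0 i 0
        rw [← ih 0, s_succ_zero]
        cases i with
        | zero => simp [s_zero_zero]
        | succ k => simp [s_succ_zero]
      | succ k =>
        show _ = gstir (-1) (-α) 0 i k
            + (((k : ℝ) + 1) * (-α) - i * (-1) + 0) * gstir (-1) (-α) 0 i (k + 1)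
        rw [← ih k, ← ih (k + 1), sRec α h1 i k, pow_succ]
        have hΓk : (Real.Gamma (1 - α)) ^ k ≠ 0 := pow_ne_zero _ hΓ
        field_simp
        ring
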